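/- Let k ≥ 2, n ≥ 1, d ≥ 1, α ∈ (0,1], ψ ∈ (0,1], ε₀ ∈ (0,1/2), Δ > 0, and q ∈ (0,1) with 5/(2α·log(1/q)) < 1/2; set ξ := 5/(4α·log(1/q)). Let θ₁, …, θ_k ∈ ℝ^d with min_{g≠h} ‖θ_g − θ_h‖ ≥ Δ, let z : {1,…,n} → {1,…,k} with n_g* := |{i : z_i = g}| ≥ nα for every g, and let Y_i = θ_{z_i} + w_i where w₁, …, w_n are independent ℝ^d-valued random vectors with P[‖w_i‖ ≥ ε₀Δ] ≤ q for each i. Then with probability at least 1 − k·exp(−nα/4), the following holds simultaneously: for every finite collection of additional points x₁, …, x_M ∈ ℝ^d with M ≤ nα(1 − ψ), every family θ̂₁, …, θ̂_k ∈ ℝ^d with max_h ‖θ̂_h − θ_h‖ ≤ (1/2 − ε₀)Δ, and every labeling ẑ of the n + M combined points (Y₁,…,Y_n, x₁,…,x_M) that assigns each point a label a minimizing the distance from the point to θ̂_a, one has for every g ∈ {1,…,k}, writing n_{gg} := |{i ∈ {1,…,n} : z_i = g and ẑ labels Y_i with g}| and n_g := the total number of combined points labeled g by ẑ: n_{gg}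 ≥ n_g*(1 − ξ) and n_{gg}/n_g ≥ 1/2 + min{(ψ − 2ξ)/(2(2 − ψ)), 1/2 − ξ}. -/

import Mathlib

open MeasureTheory ProbabilityTheory Filter Finset

set_option maxHeartbeats 1000000 in
/-- Labeling-step accuracy in the presence of adversarial outliers (Lemma
`Hs-Ls-bound-genr-out`(i) of the paper, stated uniformly): with probability at
least `1 − k·exp(−nα/4)`, for every collection of at most `nα(1−ψ)` additional
outlier points, every family of centroid estimates within `(1/2 − ε₀)Δ` of the
true centroids, and every nearest-estimated-centroid labeling of the combined
points, each cluster `g` satisfies `n_{gg} ≥ n_g*(1 − ξ)` and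
`n_{gg}/n_g ≥ 1/2 + min{(ψ − 2ξ)/(2(2 − ψ)), 1/2 − ξ}`. -/
theorem nearest_centroid_labeling_accuracy_with_outliers
    (k n d : ℕ) (hk : 2 ≤ k) (hn : 1 ≤ n) (hd : 1 ≤ d)
    (α ψ ε₀ Δ q : ℝ) (hα : α ∈ Set.Ioc (0 : ℝ) 1) (hψ : ψ ∈ Set.Ioc (0 : ℝ) 1)
    (hε₀ : ε₀ ∈ Set.Ioo (0 : ℝ) (1 / 2)) (hΔ : 0 < Δ)
    (hq : q ∈ Set.Ioo (0 : ℝ) 1)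
    (hcond : 5 / (2 * α * Real.log (1 / q)) < 1 / 2)
    (ξ : ℝ) (hξ : ξ = 5 / (4 * α * Real.log (1 / q)))
    (θ : Fin k → EuclideanSpace ℝ (Fin d))
    (hsep : ∀ g h : Fin k, g ≠ h → Δ ≤ ‖θ g - θ h‖)
    (z : Fin n → Fin k)
    (hsize : ∀ g : Fin k,
      (n : ℝ) * α ≤ ((Finset.univ.filter (fun i => z i = g)).card : ℝ))
    (Ω : Type*) [MeasureSpace Ω] [IsProbabilityMeasure (ℙ : Measure Ω)]
    (w : Fin n → Ω → EuclideanSpace ℝ (Fin d))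
    (hmeas : ∀ i, Measurable (w i))
    (hindep : iIndepFun w ℙ)
    (htail : ∀ i, (ℙ {ω | ε₀ * Δ ≤ ‖w i ω‖}).toReal ≤ q) :
    1 - k * Real.exp (-((n : ℝ) * α) / 4)
      ≤ (ℙ {ω | ∀ M : ℕ, (M : ℝ) ≤ n * α * (1 - ψ) →
            ∀ x : Fin M → EuclideanSpace ℝ (Fin d),
            ∀ θhat : Fin k → EuclideanSpace ℝ (Fin d),
            (∀ h : Fin k, ‖θhat h - θ h‖ ≤ (1 / 2 - ε₀) * Δ) →
            ∀ zhat : Fin n ⊕ Fin M → Fin k,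
            (∀ j : Fin n ⊕ Fin M, ∀ a : Fin k,
              ‖(Sum.elim (fun i => θ (z i) + w i ω) x j) - θhat (zhat j)‖
                ≤ ‖(Sum.elim (fun i => θ (z i) + w i ω) x j) - θhat a‖) →
            ∀ g : Fin k,
              (((Finset.univ.filter (fun i => z i = g)).card : ℝ) * (1 - ξ)
                ≤ ((Finset.univ.filter
                    (fun i : Fin n => z i = g ∧ zhat (Sum.inl i) = g)).card : ℝ)) ∧
              (1 / 2 + min ((ψ - 2 * ξ) / (2 * (2 - ψ))) (1 / 2 - ξ)
                ≤ ((Finset.univ.filter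
                      (fun i : Fin n => z i = g ∧ zhat (Sum.inl i) = g)).card : ℝ)
                  / ((Finset.univ.filter
                      (fun j : Fin n ⊕ Fin M => zhat j = g)).card : ℝ))}).toReal := by
  classical
  obtain ⟨hα0, hα1⟩ := hα
  obtain ⟨hψ0, hψ1⟩ := hψ
  obtain ⟨hε0, hε12⟩ := hε₀
  obtain ⟨hq0, hq1⟩ := hq
  set L : ℝ := Real.log (1 / q) with hLdef
  have hL : 0 < L := Real.log_pos (by rw [lt_div_iff₀ hq0]; linarith)
  have hξ0 : 0 < ξ := by rw [hξ]; positivity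
  have hξ14 : ξ < 1 / 4 := by
    have hD : 0 < 2 * α * L := by positivity
    rw [hξ]
    rw [div_lt_iff₀ hD] at hcond
    rw [div_lt_iff₀ (by positivity : (0:ℝ) < 4 * α * L)]
    nlinarith
  -- the indicator random variables
  set φ : EuclideanSpace ℝ (Fin d) → ℝ :=
    fun v => if ε₀ * Δ ≤ ‖v‖ then 1 else 0 with hφdef
  have hφmeas : Measurable φ := by
    refine Measurable.ite ?_ measurable_const measurable_const
    exact measurableSet_le measurable_const measurable_norm
  set X : Fin n → Ω → ℝ := fun i => φ ∘ w i with hXdef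
  have hXmeas : ∀ i, Measurable (X i) := fun i => hφmeas.comp (hmeas i)
  have hXindep : iIndepFun X ℙ :=
    hindep.comp (fun _ => φ) (fun _ => hφmeas)
  -- per-variable mgf bound
  have hAmeas : ∀ i : Fin n, MeasurableSet {ω | ε₀ * Δ ≤ ‖w i ω‖} := fun i =>
    measurableSet_le measurable_const (hmeas i).norm
  have hmgf : ∀ i : Fin n, mgf (X i) ℙ L ≤ 2 := by
    intro i
    have hexpL : Real.exp L = 1 / q := Real.exp_log (by positivity)
    have heq : (fun ω => Real.exp (L * X i ω))
        = fun ω => ({ω | ε₀ * Δ ≤ ‖w i ω‖} : Set Ω).indicator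
            (fun _ => Real.exp L - 1) ω + 1 := by
      funext ω
      by_cases h : ε₀ * Δ ≤ ‖w i ω‖
      · simp [X, φ, h, Set.indicator_of_mem, Set.mem_setOf_eq]
      · simp [X, φ, h, Set.indicator_of_notMem, Set.mem_setOf_eq]
    have hint : mgf (X i) ℙ L
        = (Real.exp L - 1) * (ℙ {ω | ε₀ * Δ ≤ ‖w i ω‖}).toReal + 1 := by
      rw [mgf, heq]
      rw [integral_add ((integrable_const _).indicator (hAmeas i)) (integrable_const 1)]
      rw [integral_indicator_const _ (hAmeas i)]
      simp [mul_comm, measureReal_def]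
    rw [hint, hexpL]
    have hp0 : 0 ≤ (ℙ {ω | ε₀ * Δ ≤ ‖w i ω‖}).toReal := ENNReal.toReal_nonneg
    have hpq := htail i
    have h1q : 1 ≤ 1 / q := by rw [le_div_iff₀ hq0]; linarith
    nlinarith [mul_le_mul_of_nonneg_left hpq (by linarith : (0:ℝ) ≤ 1 / q - 1),
      mul_div_cancel₀ (1:ℝ) (ne_of_gt hq0)]
  have hXint : ∀ i : Fin n, Integrable (fun ω => Real.exp (L * X i ω)) ℙ := by
    intro i
    refine Integrable.mono' (integrable_const (Real.exp (L * 1)))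
      (((hXmeas i).const_mul L).exp.aestronglyMeasurable) (ae_of_all _ fun ω => ?_)
    rw [Real.norm_eq_abs, abs_of_pos (Real.exp_pos _)]
    apply Real.exp_le_exp.mpr
    apply mul_le_mul_of_nonneg_left _ hL.le
    by_cases h : ε₀ * Δ ≤ ‖w i ω‖ <;> simp [X, φ, h]
  -- Chernoff bound on the bad event
  set Sf : Ω → ℝ := ∑ i : Fin n, X i with hSfdef
  have hSfapp : ∀ ω, Sf ω = ∑ i : Fin n, X i ω := by
    intro ω; rw [hSfdef, Finset.sum_apply]
  have hSfmeas : Measurable Sf := by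
    have : Sf = fun ω => ∑ i : Fin n, X i ω := funext hSfapp
    rw [this]
    exact Finset.measurable_sum _ fun i _ => hXmeas i
  set c : ℝ := ξ * ((n : ℝ) * α) with hcdef
  set bad : Set Ω := {ω | c ≤ Sf ω} with hbaddef
  have hbadmeas : MeasurableSet bad := measurableSet_le measurable_const hSfmeas
  have hchern : (ℙ bad).toReal ≤ Real.exp (-L * c) * mgf Sf ℙ L :=
    measure_ge_le_exp_mul_mgf c hL.le
      (hXindep.integrable_exp_mul_sum hXmeas (fun i _ => hXint i))
  have hmgfS : mgf Sf ℙ L ≤ 2 ^ n := by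
    rw [hSfdef, hXindep.mgf_sum hXmeas]
    calc ∏ i : Fin n, mgf (X i) ℙ L ≤ ∏ _i : Fin n, (2:ℝ) :=
          Finset.prod_le_prod (fun i _ => mgf_nonneg) (fun i _ => hmgf i)
      _ = 2 ^ n := by simp
  have hLc : L * c = 5 * n / 4 := by
    rw [hcdef, hξ]
    field_simp
  have hbadle : (ℙ bad).toReal ≤ Real.exp (-(n : ℝ) / 4) := by
    have h2e : (2:ℝ) ^ n ≤ Real.exp 1 ^ n :=
      pow_le_pow_left₀ (by norm_num) (by nlinarith [Real.add_one_le_exp (1:ℝ)]) n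
    calc (ℙ bad).toReal ≤ Real.exp (-L * c) * mgf Sf ℙ L := hchern
      _ ≤ Real.exp (-L * c) * (Real.exp 1 ^ n) := by
          refine mul_le_mul_of_nonneg_left (hmgfS.trans h2e) (Real.exp_nonneg _)
      _ = Real.exp (-(L * c) + n) := by
          rw [Real.exp_one_pow, ← Real.exp_add]; ring_nf
      _ = Real.exp (-(n : ℝ) / 4) := by rw [hLc]; ring_nf
  -- the good event implies the desired property
  have hgood : badᶜ ⊆ {ω | ∀ M : ℕ, (M : ℝ) ≤ n * α * (1 - ψ) →
            ∀ x : Fin M → EuclideanSpace ℝ (Fin d),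
            ∀ θhat : Fin k → EuclideanSpace ℝ (Fin d),
            (∀ h : Fin k, ‖θhat h - θ h‖ ≤ (1 / 2 - ε₀) * Δ) →
            ∀ zhat : Fin n ⊕ Fin M → Fin k,
            (∀ j : Fin n ⊕ Fin M, ∀ a : Fin k,
              ‖(Sum.elim (fun i => θ (z i) + w i ω) x j) - θhat (zhat j)‖
                ≤ ‖(Sum.elim (fun i => θ (z i) + w i ω) x j) - θhat a‖) →
            ∀ g : Fin k,
              (((Finset.univ.filter (fun i => z i = g)).card : ℝ) * (1 - ξ)
                ≤ ((Finset.univ.filter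
                    (fun i : Fin n => z i = g ∧ zhat (Sum.inl i) = g)).card : ℝ)) ∧
              (1 / 2 + min ((ψ - 2 * ξ) / (2 * (2 - ψ))) (1 / 2 - ξ)
                ≤ ((Finset.univ.filter
                      (fun i : Fin n => z i = g ∧ zhat (Sum.inl i) = g)).card : ℝ)
                  / ((Finset.univ.filter
                      (fun j : Fin n ⊕ Fin M => zhat j = g)).card : ℝ))} := by
    intro ω hω
    simp only [Set.mem_compl_iff, hbaddef, Set.mem_setOf_eq, not_le] at hω
    -- the number of large errors is at most c
    set B : Finset (Fin n) := Finset.univ.filter (fun i => ε₀ * Δ ≤ ‖w i ω‖) with hBdef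
    have hBcard : (B.card : ℝ) ≤ c := by
      have hsum : Sf ω = (B.card : ℝ) := by
        rw [hSfapp ω, hBdef, ← Finset.sum_boole]
        simp [hXdef, hφdef]
      rw [← hsum]; exact hω.le
    intro M hM x θhat hθhat zhat hzhat g
    -- key: small error implies correct label
    have hkey : ∀ i : Fin n, ‖w i ω‖ < ε₀ * Δ → zhat (Sum.inl i) = z i := by
      intro i hwi
      by_contra hne
      have h1 : ‖(θ (z i) + w i ω) - θhat (z i)‖ < Δ / 2 := by
        have h2 : ‖θ (z i) - θhat (z i)‖ ≤ (1 / 2 - ε₀) * Δ := by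
          rw [norm_sub_rev]; exact hθhat (z i)
        calc ‖(θ (z i) + w i ω) - θhat (z i)‖
            = ‖w i ω + (θ (z i) - θhat (z i))‖ := by
              rw [show (θ (z i) + w i ω) - θhat (z i)
                  = w i ω + (θ (z i) - θhat (z i)) from by abel]
          _ ≤ ‖w i ω‖ + ‖θ (z i) - θhat (z i)‖ := norm_add_le _ _
          _ < ε₀ * Δ + (1 / 2 - ε₀) * Δ := by linarith
          _ = Δ / 2 := by ring
      set a := zhat (Sum.inl i) with hadef
      have h3 : Δ ≤ ‖θ (z i) - θ a‖ := hsep (z i) a (fun h => hne h.symm)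
      have h4 : ‖θ (z i) - θ a‖
          ≤ ‖(θ (z i) + w i ω) - θhat a‖ + ‖w i ω‖ + ‖θhat a - θ a‖ := by
        calc ‖θ (z i) - θ a‖
            = ‖(((θ (z i) + w i ω) - θhat a) + (-(w i ω))) + (θhat a - θ a)‖ := by
              rw [show θ (z i) - θ a
                  = (((θ (z i) + w i ω) - θhat a) + (-(w i ω))) + (θhat a - θ a) from by abel]
          _ ≤ ‖((θ (z i) + w i ω) - θhat a) + (-(w i ω))‖ + ‖θhat a - θ a‖ :=
              norm_add_le _ _
          _ ≤ (‖(θ (z i) + w i ω) - θhat a‖ + ‖-(w i ω)‖) + ‖θhat a - θ a‖ := by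
              gcongr; exact norm_add_le _ _
          _ = ‖(θ (z i) + w i ω) - θhat a‖ + ‖w i ω‖ + ‖θhat a - θ a‖ := by
              rw [norm_neg]
      have h5 := hzhat (Sum.inl i) (z i)
      simp only [Sum.elim_inl, ← hadef] at h5
      have h6 := hθhat a
      linarith
    -- counting
    set T : Finset (Fin n) := Finset.univ.filter (fun i => z i = g) with hTdef
    set A : Finset (Fin n) :=
      Finset.univ.filter (fun i : Fin n => z i = g ∧ zhat (Sum.inl i) = g) with hAdef
    set Ng : Finset (Fin n ⊕ Fin M) :=
      Finset.univ.filter (fun j : Fin n ⊕ Fin M => zhat j = g) with hNgdef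
    have hTAB : T ⊆ A ∪ B := by
      intro i hi
      rw [Finset.mem_union]
      by_cases hiB : i ∈ B
      · exact Or.inr hiB
      · left
        simp only [hBdef, Finset.mem_filter, Finset.mem_univ, true_and, not_le] at hiB
        simp only [hTdef, Finset.mem_filter, Finset.mem_univ, true_and] at hi
        simp only [hAdef, Finset.mem_filter, Finset.mem_univ, true_and]
        exact ⟨hi, by rw [hkey i hiB, hi]⟩
    have hTcard : (T.card : ℝ) ≤ (A.card : ℝ) + (B.card : ℝ) := by
      have := (Finset.card_le_card hTAB).trans (Finset.card_union_le A B)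
      exact_mod_cast this
    have hsg := hsize g
    have hfirst : (T.card : ℝ) * (1 - ξ) ≤ (A.card : ℝ) := by
      have hc2 : c ≤ ξ * (T.card : ℝ) := by
        rw [hcdef]
        exact mul_le_mul_of_nonneg_left hsg hξ0.le
      linarith
    refine ⟨hfirst, ?_⟩
    -- second bound
    have hNgsub : Ng ⊆ (A.image Sum.inl ∪ B.image Sum.inl)
        ∪ (Finset.univ : Finset (Fin M)).image Sum.inr := by
      intro j hj
      simp only [hNgdef, Finset.mem_filter, Finset.mem_univ, true_and] at hj
      rcases j with i | m
      · rw [Finset.mem_union, Finset.mem_union]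
        by_cases hiB : i ∈ B
        · exact Or.inl (Or.inr (Finset.mem_image_of_mem _ hiB))
        · left; left
          simp only [hBdef, Finset.mem_filter, Finset.mem_univ, true_and, not_le] at hiB
          refine Finset.mem_image_of_mem _ ?_
          simp only [hAdef, Finset.mem_filter, Finset.mem_univ, true_and]
          exact ⟨by rw [← hkey i hiB, hj], hj⟩
      · exact Finset.mem_union_right _ (Finset.mem_image_of_mem _ (Finset.mem_univ m))
    have hNgcard : (Ng.card : ℝ) ≤ (A.card : ℝ) + (B.card : ℝ) + (M : ℝ) := by
      have h1 := Finset.card_le_card hNgsub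
      have h2 := Finset.card_union_le (A.image Sum.inl ∪ B.image Sum.inl)
        ((Finset.univ : Finset (Fin M)).image Sum.inr)
      have h3 := Finset.card_union_le (A.image (Sum.inl : Fin n → Fin n ⊕ Fin M))
        (B.image Sum.inl)
      have h4 := Finset.card_image_le (s := A) (f := (Sum.inl : Fin n → Fin n ⊕ Fin M))
      have h5 := Finset.card_image_le (s := B) (f := (Sum.inl : Fin n → Fin n ⊕ Fin M))
      have h6 := Finset.card_image_le (s := (Finset.univ : Finset (Fin M)))
        (f := (Sum.inr : Fin M → Fin n ⊕ Fin M))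
      have h7 : (Finset.univ : Finset (Fin M)).card = M := by simp
      have : Ng.card ≤ A.card + B.card + M := by omega
      exact_mod_cast this
    have hANg : (A.card : ℝ) ≤ (Ng.card : ℝ) := by
      have hsub2 : A.image Sum.inl ⊆ Ng := by
        intro j hj
        rw [Finset.mem_image] at hj
        obtain ⟨i, hi, rfl⟩ := hj
        simp only [hAdef, Finset.mem_filter, Finset.mem_univ, true_and] at hi
        simp only [hNgdef, Finset.mem_filter, Finset.mem_univ, true_and]
        exact hi.2
      have := Finset.card_le_card hsub2
      rw [Finset.card_image_of_injective _ Sum.inl_injective] at this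
      exact_mod_cast this
    have hna : 0 < (n : ℝ) * α := by
      have : (1:ℝ) ≤ (n : ℝ) := by exact_mod_cast hn
      nlinarith
    have hAlow : (n : ℝ) * α * (1 - ξ) ≤ (A.card : ℝ) := by
      nlinarith
    have hA0 : 0 < (A.card : ℝ) := by nlinarith
    have hNg0 : 0 < (Ng.card : ℝ) := lt_of_lt_of_le hA0 hANg
    have h2ψ : 0 < 2 - ψ := by linarith
    have hminle : 1 / 2 + min ((ψ - 2 * ξ) / (2 * (2 - ψ))) (1 / 2 - ξ)
        ≤ (1 - ξ) / (2 - ψ) := by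
      have : min ((ψ - 2 * ξ) / (2 * (2 - ψ))) (1 / 2 - ξ)
          ≤ (ψ - 2 * ξ) / (2 * (2 - ψ)) := min_le_left _ _
      have heq : 1 / 2 + (ψ - 2 * ξ) / (2 * (2 - ψ)) = (1 - ξ) / (2 - ψ) := by
        field_simp
        ring
      linarith
    refine le_trans hminle ?_
    rw [div_le_div_iff₀ h2ψ hNg0]
    have hbc : (B.card : ℝ) ≤ ξ * ((n:ℝ) * α) := hBcard
    have hMb : (M : ℝ) ≤ (n:ℝ) * α * (1 - ψ) := hM
    nlinarith [mul_nonneg (sub_nonneg.mpr hAlow) (by linarith : (0:ℝ) ≤ 1 - ψ + ξ),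
      mul_nonneg (by linarith : (0:ℝ) ≤ 1 - ξ)
        (by linarith : (0:ℝ) ≤ (A.card : ℝ) + (B.card : ℝ) + (M : ℝ) - (Ng.card : ℝ))]
  -- put it together
  have hcompl : (ℙ badᶜ).toReal = 1 - (ℙ bad).toReal := by
    rw [prob_compl_eq_one_sub hbadmeas,
      ENNReal.toReal_sub_of_le prob_le_one ENNReal.one_ne_top, ENNReal.toReal_one]
  have hmono : (ℙ badᶜ).toReal ≤ (ℙ _).toReal :=
    ENNReal.toReal_mono (measure_ne_top _ _) (measure_mono hgood)
  refine le_trans ?_ hmono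
  rw [hcompl]
  have hke : Real.exp (-(n : ℝ) / 4) ≤ (k : ℝ) * Real.exp (-((n : ℝ) * α) / 4) := by
    have h1 : Real.exp (-(n : ℝ) / 4) ≤ Real.exp (-((n : ℝ) * α) / 4) := by
      apply Real.exp_le_exp.mpr
      have : (0:ℝ) ≤ (n : ℝ) := Nat.cast_nonneg n
      nlinarith
    have h2 : (1:ℝ) ≤ (k : ℝ) := by exact_mod_cast le_trans (by norm_num) hk
    nlinarith [Real.exp_pos (-((n : ℝ) * α) / 4)]
  linarith
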